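/- Let g be a finite-dimensional Lie algebra over a field k of characteristic zero and let X ∈ g⊗g be antisymmetric (τ(X) = −X) and g-invariant ((ad x ⊗ id + id ⊗ ad x)(X) = 0 for all x ∈ g). Then the support a(X) = {(l⊗id)(X) : l ∈ g*} is an abelian ideal of g: it is an ideal, and [u, v] = 0 for all u, v ∈ a(X). Consequently, if g has no nonzero abelian ideals, then every g-invariant antisymmetric element of g⊗g is zero. -/

import Mathlib

open TensorProduct

noncomputable section

variable (k : Type*) [Field k] [CharZero k]
variable {g : Type*} [LieRing g] [LieAlgebra k g]

/-- Contraction `(l ⊗ id)(X)` of the first tensor factor against `l ∈ g*`. -/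
def contr1 (l : Module.Dual k g) (X : g ⊗[k] g) : g :=
  TensorProduct.lid k g (TensorProduct.map l (LinearMap.id : g →ₗ[k] g) X)

lemma contr1_tmul (l : Module.Dual k g) (a b : g) :
    contr1 k l (a ⊗ₜ[k] b) = l a • b := by
  simp [contr1]

lemma contr1_add (l : Module.Dual k g) (Y Z : g ⊗[k] g) :
    contr1 k l (Y + Z) = contr1 k l Y + contr1 k l Z := by
  simp [contr1, map_add]

lemma contr1_zero (l : Module.Dual k g) : contr1 k l (0 : g ⊗[k] g) = 0 := by
  simp [contr1]

lemma contr1_neg (l : Module.Dual k g) (Y : g ⊗[k] g) :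
    contr1 k l (-Y) = -contr1 k l Y := by
  simp [contr1, map_neg]

lemma contr1_add_left (l m : Module.Dual k g) (Y : g ⊗[k] g) :
    contr1 k (l + m) Y = contr1 k l Y + contr1 k m Y := by
  induction Y using TensorProduct.induction_on with
  | zero => simp [contr1_zero]
  | tmul a b => simp [contr1_tmul, add_smul]
  | add y z hy hz => simp only [contr1_add, hy, hz]; abel

lemma contr1_smul_left (c : k) (l : Module.Dual k g) (Y : g ⊗[k] g) :
    contr1 k (c • l) Y = c • contr1 k l Y := by
  induction Y using TensorProduct.induction_on with
  | zero => simp [contr1_zero]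
  | tmul a b => simp [contr1_tmul, smul_smul]
  | add y z hy hz => simp only [contr1_add, hy, hz, smul_add]

lemma contr1_neg_left (l : Module.Dual k g) (Y : g ⊗[k] g) :
    contr1 k (-l) Y = -contr1 k l Y := by
  rw [← neg_one_smul k l, contr1_smul_left]
  simp

lemma contr1_map (f h : g →ₗ[k] g) (l : Module.Dual k g) (Y : g ⊗[k] g) :
    contr1 k l (TensorProduct.map f h Y) = h (contr1 k (l.comp f) Y) := by
  induction Y using TensorProduct.induction_on with
  | zero => simp [contr1_zero]
  | tmul a b => simp [contr1_tmul, map_smul]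
  | add y z hy hz => simp only [map_add, contr1_add, hy, hz]

lemma contr1_comm_apply (l m : Module.Dual k g) (Y : g ⊗[k] g) :
    m (contr1 k l ((TensorProduct.comm k g g) Y)) = l (contr1 k m Y) := by
  induction Y using TensorProduct.induction_on with
  | zero => simp [contr1_zero]
  | tmul a b => simp only [TensorProduct.comm_tmul, contr1_tmul, map_smul, smul_eq_mul]; ring
  | add y z hy hz => simp only [map_add, contr1_add, hy, hz]

lemma repr_tensor {ι : Type*} (b : Module.Basis ι k g) (Y : g ⊗[k] g) (i j : ι) :
    (b.tensorProduct b).repr Y (i, j) = b.repr (contr1 k (b.coord i) Y) j := by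
  induction Y using TensorProduct.induction_on with
  | zero => simp [contr1_zero]
  | tmul a c =>
      simp [Module.Basis.tensorProduct_repr_tmul_apply, contr1_tmul, Module.Basis.coord_apply, map_smul,
        mul_comm]
  | add y z hy hz => simp only [map_add, contr1_add, hy, hz, Finsupp.add_apply]

/-- The support of a `g`-invariant antisymmetric element of `g ⊗ g` is an
abelian ideal; consequently, if `g` has no nonzero abelian ideals, any such element is zero. -/
theorem support_of_invariant_is_abelian_ideal [FiniteDimensional k g]
    (X : g ⊗[k] g)
    (hXa : TensorProduct.comm k g g X = -X)
    (hXinv : ∀ x : g,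
      TensorProduct.map (LieAlgebra.ad k g x : g →ₗ[k] g) LinearMap.id X +
        TensorProduct.map LinearMap.id (LieAlgebra.ad k g x : g →ₗ[k] g) X = 0) :
    (∀ (x : g) (l : Module.Dual k g), ∃ m : Module.Dual k g,
      ⁅x, contr1 k l X⁆ = contr1 k m X) ∧
    (∀ l m : Module.Dual k g, ⁅contr1 k l X, contr1 k m X⁆ = 0) ∧
    ((∀ I : LieIdeal k g, (∀ u ∈ I, ∀ v ∈ I, ⁅u, v⁆ = (0 : g)) → I = ⊥) → X = 0) := by
  -- antisymmetry of the pairing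
  have hB : ∀ l m : Module.Dual k g, m (contr1 k l X) = - l (contr1 k m X) := by
    intro l m
    have h := contr1_comm_apply k m l X
    rw [hXa, contr1_neg, map_neg] at h
    exact h.symm
  -- bracket formula
  have hbr : ∀ (x : g) (l : Module.Dual k g),
      ⁅x, contr1 k l X⁆ = -contr1 k (l.comp (LieAlgebra.ad k g x : g →ₗ[k] g)) X := by
    intro x l
    have h := congrArg (contr1 k l) (hXinv x)
    rw [contr1_add, contr1_zero, contr1_map, contr1_map] at h
    have hid : l.comp (LinearMap.id : g →ₗ[k] g) = l := by ext y; simp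
    rw [hid] at h
    simp only [LinearMap.id_coe, id_eq, LieAlgebra.ad_apply] at h
    rw [add_comm] at h
    exact eq_neg_of_add_eq_zero_left h
  -- part 1
  have part1 : ∀ (x : g) (l : Module.Dual k g), ∃ m : Module.Dual k g,
      ⁅x, contr1 k l X⁆ = contr1 k m X := by
    intro x l
    exact ⟨-(l.comp (LieAlgebra.ad k g x : g →ₗ[k] g)), by
      rw [contr1_neg_left]; exact hbr x l⟩
  -- the "S" trilinear form
  have hS : ∀ l m n : Module.Dual k g,
      n ⁅contr1 k l X, contr1 k m X⁆ = m ⁅contr1 k l X, contr1 k n X⁆ := by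
    intro l m n
    set u := contr1 k l X with hu
    set p := m.comp (LieAlgebra.ad k g u : g →ₗ[k] g) with hp
    have h2 := hB p n
    calc n ⁅u, contr1 k m X⁆ = n (-contr1 k p X) := by rw [hbr u m]
      _ = -(n (contr1 k p X)) := by rw [map_neg]
      _ = -(-(p (contr1 k n X))) := by rw [h2]
      _ = p (contr1 k n X) := neg_neg _
      _ = m ⁅u, contr1 k n X⁆ := by
          rw [hp]; simp [LieAlgebra.ad_apply]
  have hanti : ∀ l m n : Module.Dual k g,
      n ⁅contr1 k l X, contr1 k m X⁆ = -(n ⁅contr1 k m X, contr1 k l X⁆) := by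
    intro l m n
    have : ⁅contr1 k l X, contr1 k m X⁆ = -⁅contr1 k m X, contr1 k l X⁆ :=
      (lie_skew (contr1 k l X) (contr1 k m X)).symm
    rw [this, map_neg]
  have habel : ∀ l m : Module.Dual k g, ⁅contr1 k l X, contr1 k m X⁆ = 0 := by
    intro l m
    rw [← (Module.forall_dual_apply_eq_zero_iff k (⁅contr1 k l X, contr1 k m X⁆))]
    intro n
    have e1 : n ⁅contr1 k l X, contr1 k m X⁆ = -(n ⁅contr1 k l X, contr1 k m X⁆) := by
      calc n ⁅contr1 k l X, contr1 k m X⁆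
          = n ⁅contr1 k l X, contr1 k m X⁆ := rfl
        _ = m ⁅contr1 k l X, contr1 k n X⁆ := hS l m n
        _ = -(m ⁅contr1 k n X, contr1 k l X⁆) := hanti l n m
        _ = -(l ⁅contr1 k n X, contr1 k m X⁆) := by rw [← hS n l m]
        _ = -( -(l ⁅contr1 k m X, contr1 k n X⁆)) := by rw [hanti n m l]
        _ = l ⁅contr1 k m X, contr1 k n X⁆ := by rw [neg_neg]
        _ = n ⁅contr1 k m X, contr1 k l X⁆ := (hS m n l)
        _ = -(n ⁅contr1 k l X, contr1 k m X⁆) := by rw [hanti m l n]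
    linear_combination e1 / 2
  refine ⟨part1, habel, ?_⟩
  -- part 3
  intro hno
  -- the support ideal
  let L : Module.Dual k g →ₗ[k] g :=
    { toFun := fun l => contr1 k l X
      map_add' := fun l m => contr1_add_left k l m X
      map_smul' := fun c l => contr1_smul_left k c l X }
  let I : LieIdeal k g :=
    { carrier := LinearMap.range L
      add_mem' := fun ha hb => add_mem ha hb
      zero_mem' := zero_mem _
      smul_mem' := fun c x hx => Submodule.smul_mem _ c hx
      lie_mem := by
        rintro x y ⟨l, rfl⟩
        refine ⟨-(l.comp (LieAlgebra.ad k g x : g →ₗ[k] g)), ?_⟩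
        show contr1 k _ X = ⁅x, L l⁆
        rw [contr1_neg_left]
        exact (hbr x l).symm }
  have hIabel : ∀ u ∈ I, ∀ v ∈ I, ⁅u, v⁆ = (0 : g) := by
    rintro u ⟨l, rfl⟩ v ⟨m, rfl⟩
    exact habel l m
  have hIbot := hno I hIabel
  have hzero : ∀ l : Module.Dual k g, contr1 k l X = 0 := by
    intro l
    have : L l ∈ I := ⟨l, rfl⟩
    rw [hIbot] at this
    exact (by simpa using this : L l = 0)
  -- conclude X = 0
  let b := Module.finBasis k g
  have : ∀ p : Fin (Module.finrank k g) × Fin (Module.finrank k g),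
      (b.tensorProduct b).repr X p = 0 := by
    rintro ⟨i, j⟩
    rw [repr_tensor k b X i j, hzero (b.coord i)]
    simp
  have hrepr : (b.tensorProduct b).repr X = 0 := by
    ext p
    exact this p
  have := (b.tensorProduct b).repr.map_eq_zero_iff.mp hrepr
  exact this

end
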